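/- Let A be an algebraic curvature tensor on a nondegenerate inner product space V. Then the Jacobi operators pairwise commute (J(x)J(y) = J(y)J(x) for all x,y in V) if and only if every Jacobi operator commutes with every curvature operator (J(x)R(y,z) = R(y,z)J(x) for all x,y,z in V). -/

import Mathlib

set_option maxHeartbeats 2000000


/-- For an algebraic curvature tensor, the Jacobi operators pairwise
commute (Jacobi--Tsankov) iff every Jacobi operator commutes with every curvature
operator (mixed--Tsankov). -/
theorem stmt_4 {V : Type*} [AddCommGroup V] [Module ℝ V] [FiniteDimensional ℝ V]
    (B : LinearMap.BilinForm ℝ V) (hBsymm : ∀ x y, B x y = B y x)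
    (hBnd : B.Nondegenerate)
    (A : V →ₗ[ℝ] V →ₗ[ℝ] V →ₗ[ℝ] V →ₗ[ℝ] ℝ)
    (hpair : ∀ x y z w, A x y z w = A z w x y)
    (hanti : ∀ x y z w, A x y z w = -A y x z w)
    (hbianchi : ∀ x y z w, A x y z w + A y z x w + A z x y w = 0)
    (Rop : V →ₗ[ℝ] V →ₗ[ℝ] V →ₗ[ℝ] V)
    (hRop : ∀ x y z w, B (Rop x y z) w = A x y z w)
    (Jop : V → V →ₗ[ℝ] V)
    (hJop : ∀ x y, Jop x y = Rop y x x) :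
    (∀ x y, Jop x ∘ₗ Jop y = Jop y ∘ₗ Jop x) ↔
      (∀ x y z, Jop x ∘ₗ Rop y z = Rop y z ∘ₗ Jop x) := by
  -- antisymmetry in the second pair of slots
  have hanti2 : ∀ x y z w, A x y z w = -A x y w z := by
    intro x y z w
    rw [hpair, hanti, hpair w z x y]
  -- extensionality from nondegeneracy
  have hBext : ∀ v1 v2 : V, (∀ w, B v1 w = B v2 w) → v1 = v2 := by
    intro v1 v2 h
    have h0 : ∀ w, B (v1 - v2) w = 0 := by
      intro w
      simp [map_sub, LinearMap.sub_apply, h w]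
    exact sub_eq_zero.mp (hBnd.1 (v1 - v2) h0)
  -- B of Jacobi
  have hJB : ∀ x u w, B (Jop x u) w = A u x x w := by
    intro x u w
    rw [hJop]; exact hRop u x x w
  -- Jacobi operators are self-adjoint
  have hJsa : ∀ x u w, B (Jop x u) w = B u (Jop x w) := by
    intro x u w
    rw [hJB, hBsymm u (Jop x w), hJB]
    linear_combination hpair u x x w + hanti x w u x - hanti2 w x u x
  -- Key lemma 1: if J satisfies the (polarized) Jacobi–Tsankov identity at the
  -- curvature-tensor level, then J can be moved between the last two slots of A.
  have key1 : ∀ J : V →ₗ[ℝ] V,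
      (∀ u y1 y2 w, A u y1 y2 (J w) + A u y2 y1 (J w)
          = A (J u) y1 y2 w + A (J u) y2 y1 w) →
      ∀ a b c d, A a b c (J d) = A a b (J c) d := by
    intro J hy a b c d
    linear_combination (1/3 : ℝ) * hanti2 (J a) b c d - (1/3 : ℝ) * hanti a (J b) c d + (2/3 : ℝ) * hanti2 a (J b) c d - (1/3 : ℝ) * hbianchi a (J b) c d - (2/3 : ℝ) * hanti2 a b (J c) d - (1/3 : ℝ) * hbianchi a b (J c) d + (1/3 : ℝ) * hanti a b c (J d) + (1/3 : ℝ) * hbianchi a b c (J d) - (1/3 : ℝ) * hanti a (J b) d c - (1/3 : ℝ) * hbianchi a (J b) d c + (1/3 : ℝ) * hanti a b d (J c) + (1/3 : ℝ) * hanti2 (J a) c b d + (1/3 : ℝ) * hanti a c (J b) d - (1/3 : ℝ) * hanti2 a c (J b) d + (1/3 : ℝ) * hanti a (J c) b d - (1/3 : ℝ) * hpair a (J c) b d - (1/3 : ℝ) * hanti a c b (J d) + (1/3 : ℝ) * hanti2 (J a) d b c + (1/3 : ℝ) * hanti a d (J b) c - (1/3 : ℝ) * hanti2 a d (J b) c -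 (1/3 : ℝ) * hpair a d b (J c) + (1/3 : ℝ) * hy a b c d + (1/3 : ℝ) * hy a b d c + (1/3 : ℝ) * hy a c d b - (1/3 : ℝ) * hy b a c d - (1/3 : ℝ) * hy b a d c
  -- Key lemma 2: if J can be moved between the last two slots, it can be moved
  -- from the last slot to the first slot.
  have key2 : ∀ J : V →ₗ[ℝ] V,
      (∀ a b c d, A a b c (J d) = A a b (J c) d) →
      ∀ a b c d, A a b c (J d) = A (J a) b c d := by
    intro J hm a b c d
    linear_combination (-1/2 : ℝ) * hpair (J a) b c d - (1/2 : ℝ) * hbianchi (J a) b c d + (1/2 : ℝ) * hpair a (J b) c d - (1/2 : ℝ) * hbianchi a (J b) c d + (1/2 : ℝ) * hbianchi a b (J c) d + (1/2 : ℝ) * hbianchi a b c (J d) + (1/2 : ℝ) * hanti (J a) c b d - (1/2 : ℝ) * hpair (J a) c b d + (1/2 : ℝ) * hanti a c (J b) d - (1/2 : ℝ) * hanti a (J c) b d + (1/2 : ℝ) * hpair a (J c) b d - (1/2 : ℝ) * hanti a c b (J d) - (1/2 : ℝ) * hpair a d (J b) c + (1/2 : ℝ) * hpair a d b (J c) + (1/2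 : ℝ) * hm a b c d + (1/2 : ℝ) * hm a c b d - (1/2 : ℝ) * hm a d b c - (1/2 : ℝ) * hm b c a d + (1/2 : ℝ) * hm b d a c + (1/2 : ℝ) * hm c d a b
  constructor
  · -- Jacobi–Tsankov ⇒ mixed–Tsankov
    intro hJT x y z
    -- unpolarized identity
    have hP : ∀ u t w, A u t t (Jop x w) = A (Jop x u) t t w := by
      intro u t w
      have h1 : A u t t (Jop x w) = B (Jop t u) (Jop x w) := by rw [hJB]
      have h2 : B (Jop t u) (Jop x w) = B (Jop x (Jop t u)) w := (hJsa x (Jop t u) w).symm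
      have h3 : Jop x (Jop t u) = Jop t (Jop x u) := by
        have := congrArg (fun f => f u) (hJT x t)
        simpa using this
      rw [h1, h2, h3, hJB]
    -- polarized identity
    have hy : ∀ u y1 y2 w, A u y1 y2 (Jop x w) + A u y2 y1 (Jop x w)
        = A (Jop x u) y1 y2 w + A (Jop x u) y2 y1 w := by
      intro u y1 y2 w
      have h12 := hP u (y1 + y2) w
      have h1 := hP u y1 w
      have h2 := hP u y2 w
      simp only [map_add, LinearMap.add_apply] at h12
      linarith
    apply LinearMap.ext
    intro u
    apply hBext
    intro w
    show B (Jop x (Rop y z u)) w = B (Rop y z (Jop x u)) w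
    rw [hJsa, hRop, hRop]
    exact key1 (Jop x) hy y z u w
  · -- mixed–Tsankov ⇒ Jacobi–Tsankov
    intro hM x y
    have hm : ∀ a b c d, A a b c (Jop x d) = A a b (Jop x c) d := by
      intro a b c d
      have h1 : Jop x (Rop a b c) = Rop a b (Jop x c) := by
        have := congrArg (fun f => f c) (hM x a b)
        simpa using this
      calc A a b c (Jop x d) = B (Rop a b c) (Jop x d) := (hRop a b c (Jop x d)).symm
        _ = B (Jop x (Rop a b c)) d := (hJsa x (Rop a b c) d).symm
        _ = B (Rop a b (Jop x c)) d := by rw [h1]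
        _ = A a b (Jop x c) d := hRop a b (Jop x c) d
    apply LinearMap.ext
    intro u
    apply hBext
    intro w
    show B (Jop x (Jop y u)) w = B (Jop y (Jop x u)) w
    rw [hJsa x (Jop y u) w, hJB y u (Jop x w), hJB y (Jop x u) w]
    exact key2 (Jop x) hm u y y w
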